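/- arXiv:1108.0276 — 4 statements merged into one kernel-verified Lean document; each statement's English description precedes it below -/
import Mathlib

section
/- Let n ∈ ℕ. A metric space X embeds isometrically in Euclidean space E^n if and only if: (a) (−1)^{k+1} D_k(x_0,...,x_k) ≥ 0 for every (k+1)-tuple of points of X with k ≤ n, and (b) D_k(x_0,...,x_k) = 0 for every (k+1)-tuple of points of X with k = n+1 and k = n+2. -/
/-- The Cayley–Menger determinant of `k+1` points of a metric space. -/
def cayleyMenger {X : Type*} [PseudoMetricSpace X] (k : ℕ) (x : Fin (k + 1) → X) : ℝ :=
  Matrix.det (Matrix.of fun i j : Fin (k + 2) =>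
    if hi : i = 0 then (if j = 0 then 0 else 1)
    else if hj : j = 0 then 1
    else dist (x (i.pred hi)) (x (j.pred hj)) ^ 2)

open Matrix

namespace CM

def sumEquiv (k : ℕ) : Fin 2 ⊕ Fin k ≃ Fin (k + 2) :=
  finSumFinEquiv.trans (finCongr (by omega))

@[simp] lemma sumEquiv_inl_val {k : ℕ} (i : Fin 2) :
    ((sumEquiv k) (Sum.inl i) : ℕ) = i := by simp [sumEquiv]

@[simp] lemma sumEquiv_inr_val {k : ℕ} (j : Fin k) :
    ((sumEquiv k) (Sum.inr j) : ℕ) = 2 + j := by simp [sumEquiv]; omega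

variable {X : Type*} [PseudoMetricSpace X]

noncomputable def gfun (b x y : X) : ℝ :=
  (dist b x ^ 2 + dist b y ^ 2 - dist x y ^ 2) / 2

lemma gfun_symm (b x y : X) : gfun b x y = gfun b y x := by
  unfold gfun; rw [dist_comm x y]; ring

lemma gfun_self (b x : X) : gfun b x x = dist b x ^ 2 := by
  unfold gfun; simp

noncomputable def gmat (b : X) {k : ℕ} (q : Fin k → X) : Matrix (Fin k) (Fin k) ℝ :=
  Matrix.of fun i j => gfun b (q i) (q j)

lemma gmat_isHermitian (b : X) {k : ℕ} (q : Fin k → X) : (gmat b q).IsHermitian := by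
  ext i j
  simp [gmat, gfun_symm b (q j) (q i), conjTranspose_apply]

/-- The key determinant identity. -/
lemma cm_eq {k : ℕ} (x : Fin (k + 1) → X) :
    cayleyMenger k x = (-1) ^ (k + 1) * 2 ^ k * (gmat (x 0) (fun i => x i.succ)).det := by
  classical
  set t : Fin k → X := fun i => x i.succ with ht
  set M : Matrix (Fin (k+2)) (Fin (k+2)) ℝ := Matrix.of (fun i j : Fin (k + 2) =>
    if hi : i = 0 then (if j = 0 then 0 else 1)
    else if hj : j = 0 then 1
    else dist (x (i.pred hi)) (x (j.pred hj)) ^ 2) with hM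
  have hcm : cayleyMenger k x = M.det := rfl
  set e := sumEquiv k with he
  set β : Fin k → ℝ := fun j => dist (x 0) (t j) ^ 2 with hβ
  set A : Matrix (Fin 2) (Fin 2) ℝ := !![0,1;1,0] with hA
  set B : Matrix (Fin 2) (Fin k) ℝ := Matrix.of (fun i j => if i = 0 then 1 else β j) with hB
  set C : Matrix (Fin k) (Fin 2) ℝ := Matrix.of (fun i j => if j = 0 then 1 else β i) with hC
  set D : Matrix (Fin k) (Fin k) ℝ := Matrix.of (fun i j => dist (t i) (t j) ^ 2) with hD
  have hMval : ∀ a b : Fin (k+2), ∀ (ha : ¬ a = 0) (hb : ¬ b = 0),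
      M a b = dist (x (a.pred ha)) (x (b.pred hb)) ^ 2 := by
    intro a b ha hb
    simp only [hM, of_apply, dif_neg ha, dif_neg hb]
  have hM00 : M 0 0 = 0 := by simp [hM]
  have hM0b : ∀ b : Fin (k+2), ¬ b = 0 → M 0 b = 1 := fun b hb => by simp [hM, hb]
  have hMa0 : ∀ a : Fin (k+2), ¬ a = 0 → M a 0 = 1 := fun a ha => by simp [hM, ha]
  have h0 : e (Sum.inl 0) = 0 := by
    ext
    simp [he]
  have h1v : ((e (Sum.inl 1)) : ℕ) = 1 := by rw [he]; simp
  have h1ne : ¬ e (Sum.inl 1) = 0 := by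
    intro h
    rw [h] at h1v
    simp at h1v
  have h1pred : x ((e (Sum.inl 1)).pred h1ne) = x 0 := by
    have : (e (Sum.inl 1)).pred h1ne = 0 := by
      ext
      simp [Fin.coe_pred, h1v]
    rw [this]
  have hrne : ∀ i : Fin k, ¬ e (Sum.inr i) = 0 := by
    intro i h
    have := congrArg Fin.val h
    rw [he] at this
    simp at this
  have hrpred : ∀ i : Fin k, x ((e (Sum.inr i)).pred (hrne i)) = t i := by
    intro i
    have hpq : (e (Sum.inr i)).pred (hrne i) = i.succ := by
      ext
      simp [Fin.coe_pred, he, Fin.val_succ]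
      omega
    rw [hpq]
  have two : ∀ i : Fin 2, i = 0 ∨ i = 1 := by decide
  have hsub : M.submatrix e e = fromBlocks A B C D := by
    ext i j
    rcases i with i | i <;> rcases j with j | j
    · rcases two i with rfl | rfl <;> rcases two j with rfl | rfl <;>
        simp only [Matrix.submatrix_apply, fromBlocks_apply₁₁]
      · rw [h0, hM00]; simp [hA]
      · rw [h0, hM0b _ h1ne]; simp [hA]
      · rw [h0, hMa0 _ h1ne]; simp [hA]
      · rw [hMval _ _ h1ne h1ne, h1pred, dist_self]; simp [hA]
    · rcases two i with rfl | rfl <;>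
        simp only [Matrix.submatrix_apply, fromBlocks_apply₁₂]
      · rw [h0, hM0b _ (hrne j)]; simp [hB]
      · rw [hMval _ _ h1ne (hrne j), h1pred, hrpred j]
        simp [hB, hβ, (by decide : ¬ (1:Fin 2) = 0)]
    · rcases two j with rfl | rfl <;>
        simp only [Matrix.submatrix_apply, fromBlocks_apply₂₁]
      · rw [h0, hMa0 _ (hrne i)]; simp [hC]
      · rw [hMval _ _ (hrne i) h1ne, h1pred, hrpred i]
        simp only [hC, of_apply, if_neg (by decide : ¬ (1:Fin 2) = 0)]
        rw [dist_comm]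
    · simp only [Matrix.submatrix_apply, fromBlocks_apply₂₂]
      rw [hMval _ _ (hrne i) (hrne j), hrpred i, hrpred j]
      simp [hD]
  have hAA : A * A = 1 := by
    rw [hA, Matrix.one_fin_two]
    norm_num [Matrix.mul_fin_two]
  haveI hinvA : Invertible A := ⟨A, hAA, hAA⟩
  have hinvOf : ⅟A = A := invOf_eq_left_inv hAA
  have hdetM : M.det = (fromBlocks A B C D).det := by
    rw [← hsub, Matrix.det_submatrix_equiv_self]
  have hCAB : C * ⅟A * B = Matrix.of (fun i j => β i + β j) := by
    rw [hinvOf]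
    ext i j
    simp [Matrix.mul_apply, Fin.sum_univ_two, hA, hB, hC]
  have hSchur : D - C * ⅟A * B = (-2 : ℝ) • gmat (x 0) t := by
    rw [hCAB]
    ext i j
    rw [Matrix.sub_apply, Matrix.smul_apply]
    simp only [of_apply, smul_eq_mul, gmat, hD, hβ]
    unfold gfun
    ring
  rw [hcm, hdetM, Matrix.det_fromBlocks₁₁, hSchur, Matrix.det_smul]
  have hdetA : A.det = -1 := by simp [hA]
  simp only [Fintype.card_fin]
  rw [hdetA, show ((-2 : ℝ))^k = (-1)^k * 2^k by rw [← neg_one_mul, mul_pow]]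
  ring


noncomputable def wmat (b : X) {a c : ℕ} (q : Fin a → X) (r : Fin c → X) :
    Matrix (Fin a) (Fin c) ℝ := Matrix.of fun i j => gfun b (q i) (r j)

lemma gmat_append_submatrix (b : X) {a c : ℕ} (q : Fin a → X) (r : Fin c → X) :
    (gmat b (Fin.append q r)).submatrix finSumFinEquiv finSumFinEquiv
      = fromBlocks (gmat b q) (wmat b q r) (wmat b q r)ᴴ (gmat b r) := by
  ext i j
  rcases i with i | i <;> rcases j with j | j
  · simp [gmat, wmat, Fin.append_left]
  · simp [gmat, wmat, Fin.append_left, Fin.append_right]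
  · simp only [Matrix.submatrix_apply, finSumFinEquiv_apply_left, finSumFinEquiv_apply_right,
      fromBlocks_apply₂₁, conjTranspose_apply, gmat, wmat, of_apply, Fin.append_left,
      Fin.append_right, star_trivial]
    exact gfun_symm b _ _
  · simp [gmat, wmat, Fin.append_right]

lemma det_gmat_append (b : X) {a c : ℕ} (q : Fin a → X) (r : Fin c → X)
    (h : IsUnit (gmat b q).det) :
    (gmat b (Fin.append q r)).det
      = (gmat b q).det
        * (gmat b r - (wmat b q r)ᴴ * (gmat b q)⁻¹ * wmat b q r).det := by
  haveI := (gmat b q).invertibleOfIsUnitDet h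
  rw [← Matrix.det_submatrix_equiv_self finSumFinEquiv, gmat_append_submatrix,
    Matrix.det_fromBlocks₁₁, invOf_eq_nonsing_inv]

lemma posDef_of_psd_det_ne_zero {k : ℕ} {M : Matrix (Fin k) (Fin k) ℝ}
    (h : M.PosSemidef) (hd : M.det ≠ 0) : M.PosDef := by
  refine Matrix.posDef_iff_dotProduct_mulVec.mpr ⟨h.1, fun x hx => ?_⟩
  rcases lt_or_eq_of_le (h.dotProduct_mulVec_nonneg x) with hlt | heq
  · exact hlt
  · exfalso
    have h0 : M *ᵥ x = 0 := (h.dotProduct_mulVec_zero_iff x).mp heq.symm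
    exact hd ((Matrix.exists_mulVec_eq_zero_iff).mp ⟨x, hx, h0⟩)

lemma posSemidef_one_dim {M : Matrix (Fin 1) (Fin 1) ℝ} (h : 0 ≤ M 0 0) :
    M.PosSemidef := by
  refine Matrix.posSemidef_iff_dotProduct_mulVec.mpr ⟨?_, ?_⟩
  · ext i j
    rw [Subsingleton.elim i 0, Subsingleton.elim j 0]
    simp [conjTranspose_apply]
  · intro x
    have : star x ⬝ᵥ M *ᵥ x = M 0 0 * (x 0 * x 0) := by
      simp [dotProduct, Matrix.mulVec, Fin.sum_univ_one]
      ring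
    rw [this]
    exact mul_nonneg h (mul_self_nonneg _)

lemma posDef_append_one (b : X) {m : ℕ} {q : Fin m → X} {x : X}
    (hA : (gmat b q).PosDef)
    (hdet : 0 < (gmat b (Fin.append q (fun _ : Fin 1 => x))).det) :
    (gmat b (Fin.append q (fun _ : Fin 1 => x))).PosDef := by
  haveI := (gmat b q).invertibleOfIsUnitDet (isUnit_iff_ne_zero.mpr hA.det_pos.ne')
  set r : Fin 1 → X := fun _ => x with hr
  apply posDef_of_psd_det_ne_zero ?_ hdet.ne'
  rw [← Matrix.posSemidef_submatrix_equiv finSumFinEquiv, gmat_append_submatrix]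
  rw [Matrix.PosDef.fromBlocks₁₁ _ _ hA]
  apply posSemidef_one_dim
  have hd := det_gmat_append b q r (isUnit_iff_ne_zero.mpr hA.det_pos.ne')
  rw [hd] at hdet
  have hSdet : 0 < (gmat b r - (wmat b q r)ᴴ * (gmat b q)⁻¹ * wmat b q r).det := by
    nlinarith [hA.det_pos]
  rw [← Matrix.det_fin_one (gmat b r - (wmat b q r)ᴴ * (gmat b q)⁻¹ * wmat b q r)]
  exact hSdet.le

lemma posDef_empty (b : X) (q : Fin 0 → X) : (gmat b q).PosDef := by
  refine ⟨?_, fun x hx => absurd (Subsingleton.elim x 0) hx⟩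
  ext i
  exact i.elim0

lemma exists_max_tuple (n : ℕ) (b : X)
    (hnn : ∀ j, j ≤ n → ∀ q : Fin j → X, 0 ≤ (gmat b q).det)
    (hz : ∀ q : Fin (n+1) → X, (gmat b q).det = 0) :
    ∃ m, m ≤ n ∧ ∃ q : Fin m → X, (gmat b q).PosDef ∧
      ∀ x : X, (gmat b (Fin.append q (fun _ : Fin 1 => x))).det = 0 := by
  suffices h : ∀ t m (q : Fin m → X), m + t = n → (gmat b q).PosDef →
      ∃ m', m' ≤ n ∧ ∃ q' : Fin m' → X, (gmat b q').PosDef ∧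
        ∀ x : X, (gmat b (Fin.append q' (fun _ : Fin 1 => x))).det = 0 by
    exact h n 0 (fun i => i.elim0) (Nat.zero_add n) (posDef_empty b _)
  intro t
  induction t with
  | zero =>
    intro m q hmn hq
    obtain rfl : m = n := by omega
    exact ⟨m, le_rfl, q, hq, fun x => hz _⟩
  | succ t ih =>
    intro m q hmn hq
    by_cases hall : ∀ x : X, (gmat b (Fin.append q (fun _ : Fin 1 => x))).det = 0
    · exact ⟨m, by omega, q, hq, hall⟩
    · push_neg at hall
      obtain ⟨x, hx⟩ := hall
      have hd0 : 0 ≤ (gmat b (Fin.append q (fun _ : Fin 1 => x))).det :=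
        hnn (m+1) (by omega) _
      exact ih (m+1) (Fin.append q fun _ => x) (by omega)
        (posDef_append_one b hq (hd0.lt_of_ne (Ne.symm hx)))

lemma schur_entry (b : X) {m c : ℕ} (q : Fin m → X) (r : Fin c → X) (i j : Fin c) :
    ((wmat b q r)ᴴ * (gmat b q)⁻¹ * wmat b q r) i j
      = (fun l => gfun b (q l) (r i)) ⬝ᵥ ((gmat b q)⁻¹ *ᵥ fun l => gfun b (q l) (r j)) := by
  rw [Matrix.mul_assoc]
  simp only [Matrix.mul_apply, dotProduct, Matrix.mulVec, conjTranspose_apply, wmat,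
    of_apply, star_trivial, dotProduct]

lemma inv_symm_dot {m : ℕ} {A : Matrix (Fin m) (Fin m) ℝ} (hA : A.IsHermitian)
    (u w : Fin m → ℝ) : u ⬝ᵥ (A⁻¹ *ᵥ w) = w ⬝ᵥ (A⁻¹ *ᵥ u) := by
  have hsym : A⁻¹ᵀ = A⁻¹ := by
    ext i j
    have h := hA.inv
    conv_lhs => rw [Matrix.transpose_apply, ← h]
    simp [conjTranspose_apply]
  conv_lhs => rw [← hsym]
  rw [Matrix.mulVec_transpose, dotProduct_comm, Matrix.dotProduct_mulVec]

lemma key_dot (n : ℕ) (b : X) {m : ℕ} (q : Fin m → X)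
    (hq : (gmat b q).PosDef) (hmn : m ≤ n)
    (hnn2 : ∀ j, j ≤ n + 2 → ∀ q' : Fin j → X, 0 ≤ (gmat b q').det)
    (hvan : ∀ x : X, (gmat b (Fin.append q (fun _ : Fin 1 => x))).det = 0)
    (x y : X) :
    (fun l => gfun b (q l) x) ⬝ᵥ ((gmat b q)⁻¹ *ᵥ fun l => gfun b (q l) y)
      = gfun b x y := by
  have hU : IsUnit (gmat b q).det := isUnit_iff_ne_zero.mpr hq.det_pos.ne'
  have hdiag : ∀ z : X,
      (fun l => gfun b (q l) z) ⬝ᵥ ((gmat b q)⁻¹ *ᵥ fun l => gfun b (q l) z)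
        = gfun b z z := by
    intro z
    have h0 := hvan z
    rw [det_gmat_append b q _ hU] at h0
    have hS : (gmat b (fun _ : Fin 1 => z)
        - (wmat b q fun _ => z)ᴴ * (gmat b q)⁻¹ * (wmat b q fun _ => z)).det = 0 := by
      rcases mul_eq_zero.mp h0 with h | h
      · exact absurd h hq.det_pos.ne'
      · exact h
    rw [Matrix.det_fin_one, Matrix.sub_apply, schur_entry] at hS
    have hg : gmat b (fun _ : Fin 1 => z) 0 0 = gfun b z z := rfl
    rw [hg] at hS
    linarith
  set r : Fin 2 → X := ![x, y] with hr
  set S := gmat b r - (wmat b q r)ᴴ * (gmat b q)⁻¹ * wmat b q r with hSdef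
  have hSdet : 0 ≤ S.det := by
    have hb := hnn2 (m+2) (by omega) (Fin.append q r)
    rw [det_gmat_append b q r hU] at hb
    nlinarith [hq.det_pos]
  have hr0 : r 0 = x := rfl
  have hr1 : r 1 = y := rfl
  have h00 : S 0 0 = 0 := by
    rw [hSdef, Matrix.sub_apply, schur_entry]
    have hg : gmat b r 0 0 = gfun b x x := by rw [gmat, of_apply, hr0]
    rw [hg, hr0, hdiag x, sub_self]
  have h11 : S 1 1 = 0 := by
    rw [hSdef, Matrix.sub_apply, schur_entry]
    have hg : gmat b r 1 1 = gfun b y y := by rw [gmat, of_apply, hr1]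
    rw [hg, hr1, hdiag y, sub_self]
  have h10 : S 1 0 = S 0 1 := by
    rw [hSdef, Matrix.sub_apply, Matrix.sub_apply, schur_entry, schur_entry, hr0, hr1]
    have hg : gmat b r 1 0 = gmat b r 0 1 := by
      rw [gmat, of_apply, of_apply, hr0, hr1]
      exact gfun_symm b y x
    rw [hg, inv_symm_dot hq.isHermitian]
  rw [Matrix.det_fin_two, h00, h11, h10] at hSdet
  have hS01 : S 0 1 = 0 := by nlinarith
  rw [hSdef, Matrix.sub_apply, schur_entry, hr0, hr1] at hS01
  have hg : gmat b r 0 1 = gfun b x y := rfl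
  rw [hg] at hS01
  linarith

lemma sum_pad {m n : ℕ} (hmn : m ≤ n) (c : Fin m → ℝ) :
    (∑ i : Fin n, (if h : (i : ℕ) < m then c ⟨i, h⟩ else 0) ^ 2)
      = ∑ j : Fin m, c j ^ 2 := by
  have hr : (∑ j : Fin m, c j ^ 2)
      = ∑ j : Fin m, (if h : (j : ℕ) < m then c ⟨(j : ℕ), h⟩ else 0) ^ 2 :=
    Finset.sum_congr rfl (fun j _ => by rw [dif_pos j.2])
  rw [hr, Fin.sum_univ_eq_sum_range (fun i => (if h : i < m then c ⟨i, h⟩ else 0) ^ 2),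
    Fin.sum_univ_eq_sum_range (fun i => (if h : i < m then c ⟨i, h⟩ else 0) ^ 2)]
  symm
  apply Finset.sum_subset (Finset.range_subset_range.mpr hmn)
  intro i _ hi
  rw [Finset.mem_range, not_lt] at hi
  rw [dif_neg (by omega)]
  norm_num

lemma herm_transpose {k : ℕ} {M : Matrix (Fin k) (Fin k) ℝ} (h : M.IsHermitian) :
    Mᵀ = M := by
  ext i j
  rw [Matrix.transpose_apply]
  conv_lhs => rw [← h]
  simp [conjTranspose_apply]

lemma embeds (n : ℕ) (b : X)
    (hnn2 : ∀ j, j ≤ n + 2 → ∀ q' : Fin j → X, 0 ≤ (gmat b q').det)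
    (hz1 : ∀ q' : Fin (n+1) → X, (gmat b q').det = 0) :
    ∃ f : X → EuclideanSpace ℝ (Fin n), Isometry f := by
  obtain ⟨m, hmn, q, hq, hvan⟩ :=
    exists_max_tuple n b (fun j hj => hnn2 j (by omega)) hz1
  have hpsd : ((gmat b q)⁻¹).PosSemidef := hq.inv.posSemidef
  obtain ⟨R, hRsymm, hRR⟩ : ∃ R : Matrix (Fin m) (Fin m) ℝ,
      Rᵀ = R ∧ R * R = (gmat b q)⁻¹ :=
    by
      open scoped MatrixOrder in
      exact ⟨CFC.sqrt ((gmat b q)⁻¹), herm_transpose (CFC.sqrt_nonneg _).posSemidef.isHermitian,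
        CFC.sqrt_mul_sqrt_self _ hpsd.nonneg⟩
  obtain ⟨w, hwdot⟩ : ∃ w : X → (Fin m → ℝ), ∀ x y : X, w x ⬝ᵥ w y = gfun b x y := by
    refine ⟨fun x => R *ᵥ (fun l => gfun b (q l) x), fun x y => ?_⟩
    have step1 : (R *ᵥ (fun l => gfun b (q l) x)) ⬝ᵥ (R *ᵥ (fun l => gfun b (q l) y))
        = (fun l => gfun b (q l) x) ⬝ᵥ ((gmat b q)⁻¹ *ᵥ (fun l => gfun b (q l) y)) := by
      conv_lhs => rw [← Matrix.vecMul_transpose, hRsymm]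
      rw [← Matrix.dotProduct_mulVec, Matrix.mulVec_mulVec, hRR]
    rw [step1]
    exact key_dot n b q hq hmn hnn2 hvan x y
  set f : X → EuclideanSpace ℝ (Fin n) :=
    fun x => WithLp.toLp 2 fun i => if h : (i : ℕ) < m then w x ⟨i, h⟩ else 0 with hf
  refine ⟨f, Isometry.of_dist_eq fun x y => ?_⟩
  have hcoord : ∀ i : Fin n, dist (f x i) (f y i) ^ 2
      = (if h : (i : ℕ) < m then (w x - w y) ⟨i, h⟩ else 0) ^ 2 := by
    intro i
    rw [Real.dist_eq, sq_abs, hf]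
    by_cases h : (i : ℕ) < m <;> simp [h]
  have hsum : (∑ i : Fin n, dist (f x i) (f y i) ^ 2)
      = ∑ j : Fin m, ((w x - w y) j) ^ 2 := by
    rw [Finset.sum_congr rfl (fun i _ => hcoord i), sum_pad hmn]
  have hexp : (∑ j : Fin m, ((w x - w y) j) ^ 2)
      = w x ⬝ᵥ w x - 2 * (w x ⬝ᵥ w y) + w y ⬝ᵥ w y := by
    have h1 : (∑ j : Fin m, ((w x - w y) j) ^ 2)
        = ∑ j : Fin m, (w x j * w x j - 2 * (w x j * w y j) + w y j * w y j) :=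
      Finset.sum_congr rfl fun j _ => by rw [Pi.sub_apply]; ring
    rw [h1, Finset.sum_add_distrib, Finset.sum_sub_distrib, ← Finset.mul_sum]
    rfl
  have hdists : (∑ i : Fin n, dist (f x i) (f y i) ^ 2) = dist x y ^ 2 := by
    rw [hsum, hexp, hwdot x x, hwdot x y, hwdot y y, gfun_self, gfun_self]
    unfold gfun
    ring
  rw [EuclideanSpace.dist_eq,
    show (∑ i : Fin n, dist (f x i) (f y i) ^ 2) = dist x y ^ 2 from hdists,
    Real.sqrt_sq dist_nonneg]

lemma cm_cons (b : X) {j : ℕ} (q : Fin j → X) :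
    cayleyMenger j (Fin.cons b q) = (-1) ^ (j+1) * 2 ^ j * (gmat b q).det := by
  have h0 : (Fin.cons b q : Fin (j+1) → X) 0 = b := Fin.cons_zero _ _
  have ht : (fun i : Fin j => (Fin.cons b q : Fin (j+1) → X) i.succ) = q :=
    funext fun i => Fin.cons_succ _ _ _
  rw [cm_eq, h0, ht]

lemma neg_one_pow_mul_cancel (k : ℕ) (c : ℝ) :
    (-1 : ℝ) ^ (k+1) * ((-1) ^ (k+1) * c) = c := by
  rw [← mul_assoc, ← pow_add]
  have he : Even (k+1+(k+1)) := ⟨k+1, rfl⟩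
  rw [he.neg_one_pow, one_mul]

lemma det_nonneg_psd {k : ℕ} {M : Matrix (Fin k) (Fin k) ℝ} (h : M.PosSemidef) :
    0 ≤ M.det := by
  exact h.det_nonneg

lemma gfun_inner {n : ℕ} {f : X → EuclideanSpace ℝ (Fin n)} (hf : Isometry f)
    (b p r : X) : (inner ℝ (f p - f b) (f r - f b) : ℝ) = gfun b p r := by
  have h := norm_sub_sq_real (f p - f b) (f r - f b)
  rw [sub_sub_sub_cancel_right] at h
  have d1 : ‖f p - f r‖ = dist p r := by rw [← dist_eq_norm, hf.dist_eq]
  have d2 : ‖f p - f b‖ = dist p b := by rw [← dist_eq_norm, hf.dist_eq]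
  have d3 : ‖f r - f b‖ = dist r b := by rw [← dist_eq_norm, hf.dist_eq]
  rw [d1, d2, d3] at h
  unfold gfun
  rw [dist_comm b p, dist_comm b r]
  linarith

lemma gmat_eq_gram {n : ℕ} {f : X → EuclideanSpace ℝ (Fin n)} (hf : Isometry f)
    (b : X) {k : ℕ} (t : Fin k → X) :
    gmat b t = (Matrix.of fun (a : Fin n) (i : Fin k) => (f (t i) - f b) a)ᴴ
      * (Matrix.of fun (a : Fin n) (i : Fin k) => (f (t i) - f b) a) := by
  ext i j
  rw [Matrix.mul_apply]
  simp only [conjTranspose_apply, of_apply, star_trivial]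
  rw [gmat, of_apply, ← gfun_inner hf b (t i) (t j), PiLp.inner_apply]
  simp [RCLike.inner_apply, starRingEnd_apply, mul_comm]

lemma det_gmat_nonneg_isometry {n : ℕ} {f : X → EuclideanSpace ℝ (Fin n)}
    (hf : Isometry f) (b : X) {k : ℕ} (t : Fin k → X) : 0 ≤ (gmat b t).det :=
  det_nonneg_psd (by rw [gmat_eq_gram hf]; exact Matrix.posSemidef_conjTranspose_mul_self _)

lemma det_gmat_zero_isometry {n : ℕ} {f : X → EuclideanSpace ℝ (Fin n)}
    (hf : Isometry f) (b : X) {k : ℕ} (hk : n < k) (t : Fin k → X) :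
    (gmat b t).det = 0 := by
  set u : Fin k → EuclideanSpace ℝ (Fin n) := fun i => f (t i) - f b with hu
  have hnli : ¬ LinearIndependent ℝ u := by
    intro h
    have hcard := h.fintype_card_le_finrank
    rw [finrank_euclideanSpace_fin, Fintype.card_fin] at hcard
    omega
  obtain ⟨g, hgsum, i0, hgi⟩ := Fintype.not_linearIndependent_iff.mp hnli
  have hg0 : g ≠ 0 := fun h => hgi (by rw [h]; rfl)
  apply Matrix.exists_mulVec_eq_zero_iff.mp
  refine ⟨g, hg0, ?_⟩
  funext i
  have hent : ∀ j, gmat b t i j = (inner ℝ (u i) (u j) : ℝ) := fun j =>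
    (gfun_inner hf b (t i) (t j)).symm
  have : (gmat b t *ᵥ g) i = ∑ j, gmat b t i j * g j := rfl
  rw [this]
  calc (∑ j, gmat b t i j * g j)
      = ∑ j, (inner ℝ (u i) (g j • u j) : ℝ) := by
        apply Finset.sum_congr rfl
        intro j _
        rw [hent j, real_inner_smul_right]
        ring
    _ = (inner ℝ (u i) (∑ j, g j • u j) : ℝ) := (inner_sum _ _ _).symm
    _ = 0 := by rw [hgsum, inner_zero_right]

end CM

theorem stmt9 {X : Type*} [MetricSpace X] (n : ℕ) :
    (∃ f : X → EuclideanSpace ℝ (Fin n), Isometry f) ↔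
      ((∀ k : ℕ, k ≤ n → ∀ x : Fin (k + 1) → X,
          0 ≤ (-1 : ℝ) ^ (k + 1) * cayleyMenger k x) ∧
        (∀ k : ℕ, (k = n + 1 ∨ k = n + 2) → ∀ x : Fin (k + 1) → X,
          cayleyMenger k x = 0)) := by
  constructor
  · rintro ⟨f, hf⟩
    constructor
    · intro k hk x
      rw [CM.cm_eq, show (-1:ℝ)^(k+1) * 2^k * (CM.gmat (x 0) (fun i => x i.succ)).det
          = (-1:ℝ)^(k+1) * (2^k * (CM.gmat (x 0) (fun i => x i.succ)).det) from
          mul_assoc _ _ _,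
        CM.neg_one_pow_mul_cancel]
      exact mul_nonneg (by positivity) (CM.det_gmat_nonneg_isometry hf _ _)
    · intro k hk x
      rw [CM.cm_eq, CM.det_gmat_zero_isometry hf (x 0) (by omega) (fun i => x i.succ),
        mul_zero]
  · rintro ⟨H1, H2⟩
    cases isEmpty_or_nonempty X with
    | inl h => exact ⟨fun x => isEmptyElim x, fun x => isEmptyElim x⟩
    | inr h =>
      obtain ⟨b⟩ := h
      have hfac : ∀ j : ℕ, ((-1:ℝ)^(j+1) * 2^j) ≠ 0 :=
        fun j => mul_ne_zero (pow_ne_zero _ (by norm_num)) (pow_ne_zero _ two_ne_zero)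
      have hz : ∀ j, (j = n + 1 ∨ j = n + 2) → ∀ q : Fin j → X, (CM.gmat b q).det = 0 := by
        intro j hj q
        have h := H2 j hj (Fin.cons b q)
        rw [CM.cm_cons] at h
        rcases mul_eq_zero.mp h with h' | h'
        · exact absurd h' (hfac j)
        · exact h'
      have hnn2 : ∀ j, j ≤ n + 2 → ∀ q : Fin j → X, 0 ≤ (CM.gmat b q).det := by
        intro j hj q
        rcases (by omega : j ≤ n ∨ j = n + 1 ∨ j = n + 2) with hc | hc
        · have h := H1 j hc (Fin.cons b q)
          rw [CM.cm_cons, show (-1:ℝ)^(j+1) * 2^j * (CM.gmat b q).det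
              = (-1:ℝ)^(j+1) * (2^j * (CM.gmat b q).det) from mul_assoc _ _ _,
            CM.neg_one_pow_mul_cancel] at h
          have hp : (0:ℝ) < 2^j := by positivity
          nlinarith
        · rw [hz j hc q]
      exact CM.embeds n b hnn2 (fun q => hz (n+1) (Or.inl rfl) q)
end

section
/- (Menger) A metric space X embeds isometrically in E^n if and only if every subset A ⊆ X with card A ≤ n+3 embeds isometrically in E^n. -/
open RealInnerProductSpace

local notation "E" n => EuclideanSpace ℝ (Fin n)

-- Lemma 1: a linear map preserving inner products on a basis preserves all inner products.
lemma menger_inner_map {F G : Type*} [NormedAddCommGroup F] [InnerProductSpace ℝ F]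
    [NormedAddCommGroup G] [InnerProductSpace ℝ G] {ι : Type*} (b : Module.Basis ι ℝ F)
    (L : F →ₗ[ℝ] G) (h : ∀ i j, ⟪L (b i), L (b j)⟫ = ⟪b i, b j⟫) :
    ∀ u v, ⟪L u, L v⟫ = ⟪u, v⟫ := by
  intro u v
  have hB : (innerₗ G).compl₁₂ L L = innerₗ F := LinearMap.ext_basis b b (fun i j => h i j)
  exact LinearMap.congr_fun (LinearMap.congr_fun hB u) v

-- polarization: inner products of difference vectors from distances
lemma menger_polar {F : Type*} [NormedAddCommGroup F] [InnerProductSpace ℝ F]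
    (a b c : F) : ⟪b - a, c - a⟫ =
      (dist b a ^ 2 + dist c a ^ 2 - dist b c ^ 2) / 2 := by
  have h1 : (b - a) - (c - a) = b - c := by abel
  rw [real_inner_eq_norm_mul_self_add_norm_mul_self_sub_norm_sub_mul_self_div_two, h1,
    dist_eq_norm, dist_eq_norm, dist_eq_norm]
  ring

-- Lemma 2: move a congruent copy of an affinely independent tuple onto it by an ambient isometry.
lemma menger_move {n : ℕ} (p q : Fin (n + 1) → E n)
    (hp : AffineIndependent ℝ p)
    (hd : ∀ i j, dist (q i) (q j) = dist (p i) (p j)) :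
    ∃ φ : (E n) → E n, Isometry φ ∧ ∀ i, φ (q i) = p i := by
  classical
  have hli : LinearIndependent ℝ fun i : {x : Fin (n + 1) // x ≠ 0} => p ↑i - p 0 := by
    have := (affineIndependent_iff_linearIndependent_vsub ℝ p 0).mp hp
    simpa [vsub_eq_sub] using this
  have hcard : Fintype.card {x : Fin (n + 1) // x ≠ 0} = Module.finrank ℝ (E n) := by
    simp [Fintype.card_subtype_compl]
  have hspan : Submodule.span ℝ (Set.range fun i : {x : Fin (n + 1) // x ≠ 0} => p ↑i - p 0)
      = ⊤ := by
    apply Submodule.eq_top_of_finrank_eq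
    rw [finrank_span_eq_card hli, hcard]
  set bas := Module.Basis.mk hli hspan.ge with hbas
  have hbase : ∀ i : {x : Fin (n + 1) // x ≠ 0}, bas i = p ↑i - p 0 := by
    intro i; rw [hbas, Module.Basis.coe_mk]
  set L : (E n) →ₗ[ℝ] E n := bas.constr ℝ (fun i => q ↑i - q 0) with hLdef
  have hLb : ∀ i : {x : Fin (n + 1) // x ≠ 0}, L (p ↑i - p 0) = q ↑i - q 0 := by
    intro i; rw [← hbase i, hLdef, Module.Basis.constr_basis]
  have hin : ∀ u v, ⟪L u, L v⟫ = ⟪u, v⟫ := by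
    apply menger_inner_map bas L
    intro i j
    rw [hbase i, hbase j, hLb i, hLb j, menger_polar, menger_polar,
      hd, hd, hd]
  set Li : (E n) →ₗᵢ[ℝ] E n := L.isometryOfInner hin with hLi
  have hsurj : Function.Surjective Li := by
    have hinj : Function.Injective L := Li.injective
    exact (LinearMap.injective_iff_surjective (f := L)).mp hinj
  set Leq := LinearIsometryEquiv.ofSurjective Li hsurj with hLeq
  have hLeqc : ∀ z, Leq z = L z := fun z => rfl
  refine ⟨fun z => p 0 + Leq.symm (z - q 0), ?_, ?_⟩
  · apply Isometry.of_dist_eq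
    intro z z'
    simp only [dist_eq_norm, add_sub_add_left_eq_sub, ← LinearIsometryEquiv.map_sub,
      LinearIsometryEquiv.norm_map]
    congr 1; abel
  · intro i
    by_cases hi : i = 0
    · simp [hi]
    · have hqi : Leq (p i - p 0) = q i - q 0 := by
        rw [hLeqc]; exact hLb ⟨i, hi⟩
      show p 0 + Leq.symm (q i - q 0) = p i
      rw [← hqi, LinearIsometryEquiv.symm_apply_apply]
      abel

-- Lemma 3: uniqueness of a point with given distances to an affinely independent spanning tuple.
lemma menger_unique {n : ℕ} (p : Fin (n + 1) → E n) (hp : AffineIndependent ℝ p)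
    (q q' : E n) (h : ∀ i, dist q (p i) = dist q' (p i)) : q = q' := by
  classical
  have hli : LinearIndependent ℝ fun i : {x : Fin (n + 1) // x ≠ 0} => p ↑i - p 0 := by
    have := (affineIndependent_iff_linearIndependent_vsub ℝ p 0).mp hp
    simpa [vsub_eq_sub] using this
  have hcard : Fintype.card {x : Fin (n + 1) // x ≠ 0} = Module.finrank ℝ (E n) := by
    simp [Fintype.card_subtype_compl]
  have hspan : Submodule.span ℝ (Set.range fun i : {x : Fin (n + 1) // x ≠ 0} => p ↑i - p 0)
      = ⊤ := by
    apply Submodule.eq_top_of_finrank_eq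
    rw [finrank_span_eq_card hli, hcard]
  have key : ∀ i : Fin (n + 1), ⟪q - q', p i - p 0⟫ = 0 := by
    intro i
    have h0 := h 0
    have hi := h i
    simp only [dist_eq_norm] at h0 hi
    have e0 : ‖q - p 0‖ ^ 2 = ‖q' - p 0‖ ^ 2 := by rw [h0]
    have ei : ‖q - p i‖ ^ 2 = ‖q' - p i‖ ^ 2 := by rw [hi]
    rw [norm_sub_sq_real, norm_sub_sq_real] at e0 ei
    rw [inner_sub_left, inner_sub_right, inner_sub_right]
    linarith
  have hmem : q - q' ∈ Submodule.span ℝ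
      (Set.range fun i : {x : Fin (n + 1) // x ≠ 0} => p ↑i - p 0) := by
    rw [hspan]; trivial
  have hall : ∀ w ∈ Submodule.span ℝ
      (Set.range fun i : {x : Fin (n + 1) // x ≠ 0} => p ↑i - p 0), ⟪q - q', w⟫ = 0 := by
    intro w hw
    refine Submodule.span_induction (p := fun w _ => ⟪q - q', w⟫ = 0) ?_ ?_ ?_ ?_ hw
    · rintro w ⟨i, rfl⟩; exact key i
    · exact inner_zero_right _
    · intro w w' _ _ hw hw'; rw [inner_add_right, hw, hw']; ring
    · intro c w _ hw; rw [inner_smul_right, hw]; ring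
  have hzero : ⟪q - q', q - q'⟫ = 0 := hall _ hmem
  have := inner_self_eq_zero.mp hzero
  exact sub_eq_zero.mp this

-- Lemma 4': padding isometry
lemma menger_pad {d m : ℕ} (h : d ≤ m) : ∃ L : (E d) →ₗᵢ[ℝ] E m, True := by
  classical
  set e := EuclideanSpace.basisFun (Fin d) ℝ with he
  set u : Fin d → E m := fun i => EuclideanSpace.single (Fin.castLE h i) (1 : ℝ) with hu
  set L : (E d) →ₗ[ℝ] E m := e.toBasis.constr ℝ u with hL
  have hin : ∀ i j, ⟪L (e.toBasis i), L (e.toBasis j)⟫ = ⟪e.toBasis i, e.toBasis j⟫ := by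
    intro i j
    rw [hL, Module.Basis.constr_basis, Module.Basis.constr_basis, OrthonormalBasis.coe_toBasis,
      orthonormal_iff_ite.mp e.orthonormal i j, hu]
    simp only [EuclideanSpace.inner_single_left, EuclideanSpace.single_apply, map_one, one_mul]
    by_cases hij : i = j
    · simp [hij]
    · have hne : Fin.castLE h j ≠ Fin.castLE h i := fun hc => hij ((Fin.castLE_injective h) hc).symm
      simp [hij, hne]
  exact ⟨L.isometryOfInner (menger_inner_map e.toBasis L hin), trivial⟩

-- Lemma 4: a low-dimensional subspace embeds isometrically
lemma menger_sub {n m : ℕ} (W : Submodule ℝ (E n)) (h : Module.finrank ℝ W ≤ m) :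
    ∃ L : W →ₗᵢ[ℝ] E m, True := by
  obtain ⟨L0, -⟩ := menger_pad h
  have o := stdOrthonormalBasis ℝ W
  exact ⟨L0.comp ((stdOrthonormalBasis ℝ W).repr.toLinearIsometry), trivial⟩

theorem stmt10 {X : Type*} [MetricSpace X] (n : ℕ) :
    (∃ f : X → EuclideanSpace ℝ (Fin n), Isometry f) ↔
      (∀ A : Finset X, A.card ≤ n + 3 →
        ∃ f : A → EuclideanSpace ℝ (Fin n), Isometry f) := by
  classical
  constructor
  · rintro ⟨f, hf⟩ A _
    exact ⟨f ∘ (↑), hf.comp (Isometry.of_dist_eq fun a b => rfl)⟩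
  · induction n with
    | zero =>
      intro h
      have hsub : ∀ x y : X, x = y := by
        intro x y
        obtain ⟨f, hf⟩ := h {x, y} (le_trans (Finset.card_insert_le _ _) (by simp))
        have hx : x ∈ ({x, y} : Finset X) := by simp
        have hy : y ∈ ({x, y} : Finset X) := by simp
        have hde := hf.dist_eq ⟨x, hx⟩ ⟨y, hy⟩
        have h0 : f ⟨x, hx⟩ = f ⟨y, hy⟩ := Subsingleton.elim _ _
        rw [h0, dist_self] at hde
        have hdist : dist x y = 0 := by rw [Subtype.dist_eq] at hde; exact hde.symm
        exact dist_eq_zero.mp hdist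
      refine ⟨fun _ => 0, Isometry.of_dist_eq fun x y => ?_⟩
      rw [dist_self, hsub x y, dist_self]
    | succ n ih =>
      intro h
      by_cases hA : ∃ (b : Fin (n + 2) → X) (p : Fin (n + 2) → EuclideanSpace ℝ (Fin (n + 1))),
          (∀ i j, dist (p i) (p j) = dist (b i) (b j)) ∧ AffineIndependent ℝ p
      · obtain ⟨b, p, hbp, hp⟩ := hA
        set Bs : Finset X := Finset.image b Finset.univ with hBs
        have hBmem : ∀ i, b i ∈ Bs := fun i => Finset.mem_image_of_mem b (Finset.mem_univ i)
        have hBcard : Bs.card ≤ n + 2 := le_trans Finset.card_image_le (by simp)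
        have key : ∀ s : Finset X, Bs ⊆ s → s.card ≤ n + 1 + 3 →
            ∃ g : s → EuclideanSpace ℝ (Fin (n + 1)), Isometry g ∧
              ∀ (i : Fin (n + 2)) (hm : b i ∈ s), g ⟨b i, hm⟩ = p i := by
          intro s hs hcard
          obtain ⟨g0, hg0⟩ := h s hcard
          set q : Fin (n + 2) → EuclideanSpace ℝ (Fin (n + 1)) :=
            fun i => g0 ⟨b i, hs (hBmem i)⟩ with hq
          have hqd : ∀ i j, dist (q i) (q j) = dist (p i) (p j) := by
            intro i j
            rw [hq]
            simp only
            rw [hg0.dist_eq, Subtype.dist_eq]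
            exact (hbp i j).symm
          obtain ⟨φ, hφ, hφq⟩ := menger_move p q hp hqd
          exact ⟨φ ∘ g0, hφ.comp hg0, fun i hm => hφq i⟩
        have hex : ∀ x : X, ∃ r, ∀ i, dist r (p i) = dist x (b i) := by
          intro x
          obtain ⟨g, hg, hgb⟩ := key (insert x Bs) (Finset.subset_insert x Bs)
            (le_trans (Finset.card_insert_le _ _) (by omega))
          refine ⟨g ⟨x, Finset.mem_insert_self x Bs⟩, fun i => ?_⟩
          rw [← hgb i (Finset.mem_insert_of_mem (hBmem i)), hg.dist_eq, Subtype.dist_eq]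
        choose f hf using hex
        refine ⟨f, Isometry.of_dist_eq fun x y => ?_⟩
        obtain ⟨g, hg, hgb⟩ := key (insert x (insert y Bs))
          (le_trans (le_trans (Finset.subset_insert y Bs) (Finset.subset_insert x _)) le_rfl)
          (le_trans (Finset.card_insert_le _ _)
            (by have := Finset.card_insert_le y Bs; omega))
        have hgx : g ⟨x, Finset.mem_insert_self x _⟩ = f x := by
          apply menger_unique p hp
          intro i
          rw [hf, ← hgb i (Finset.mem_insert_of_mem (Finset.mem_insert_of_mem (hBmem i))),
            hg.dist_eq, Subtype.dist_eq]
        have hgy : g ⟨y, Finset.mem_insert_of_mem (Finset.mem_insert_self y Bs)⟩ = f y := by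
          apply menger_unique p hp
          intro i
          rw [hf, ← hgb i (Finset.mem_insert_of_mem (Finset.mem_insert_of_mem (hBmem i))),
            hg.dist_eq, Subtype.dist_eq]
        rw [← hgx, ← hgy, hg.dist_eq, Subtype.dist_eq]
      · push_neg at hA
        have h' : ∀ A : Finset X, A.card ≤ n + 3 →
            ∃ f : A → EuclideanSpace ℝ (Fin n), Isometry f := by
          intro A hAcard
          rcases isEmpty_or_nonempty A with hE | hN
          · exact ⟨fun a => isEmptyElim a, Isometry.of_dist_eq fun a => isEmptyElim a⟩
          · obtain ⟨a₀⟩ := hN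
            obtain ⟨g, hg⟩ := h A (by omega)
            have hW : Module.finrank ℝ (vectorSpan ℝ (Set.range g)) ≤ n := by
              by_contra hlt
              push_neg at hlt
              obtain ⟨t, hts, htspan, htind⟩ := exists_affineIndependent ℝ
                (EuclideanSpace ℝ (Fin (n + 1))) (Set.range g)
              have htfin : t.Finite := (Set.finite_range g).subset hts
              haveI := htfin.fintype
              have hvs : vectorSpan ℝ t = vectorSpan ℝ (Set.range g) := by
                rw [← direction_affineSpan, htspan, direction_affineSpan]
              have hfr : n + 1 ≤ Module.finrank ℝ (vectorSpan ℝ t) := by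
                rw [hvs]; omega
              have hne : t.Nonempty := by
                by_contra hte
                rw [Set.not_nonempty_iff_eq_empty] at hte
                rw [hte, vectorSpan_empty] at hfr
                simp at hfr
              haveI : Nonempty t := hne.to_subtype
              have hcardt : n + 2 ≤ Fintype.card t := by
                by_contra hc
                push_neg at hc
                obtain ⟨m, hm⟩ : ∃ m, Fintype.card t = m + 1 :=
                  ⟨_, (Nat.succ_pred_eq_of_pos Fintype.card_pos).symm⟩
                have hble := finrank_vectorSpan_range_le ℝ
                  ((↑) : t → EuclideanSpace ℝ (Fin (n + 1))) hm
                rw [Subtype.range_coe] at hble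
                omega
              obtain ⟨e⟩ := Function.Embedding.nonempty_of_card_le
                (α := Fin (n + 2)) (β := t) (by simpa using hcardt)
              have hPind : AffineIndependent ℝ (((↑) : t → EuclideanSpace ℝ (Fin (n + 1))) ∘ e) :=
                htind.comp_embedding e
              have hsub : ∀ i : Fin (n + 2), ∃ a : A, g a = ↑(e i) := fun i => hts (e i).2
              choose a ha using hsub
              exact hA (fun i => ↑(a i)) (fun i => ↑(e i)) (fun i j => by
                try simp only [Function.comp]
                rw [← ha i, ← ha j, hg.dist_eq, Subtype.dist_eq]) hPind
            obtain ⟨L, -⟩ := menger_sub (vectorSpan ℝ (Set.range g)) hW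
            have hmem : ∀ a : A, g a - g a₀ ∈ vectorSpan ℝ (Set.range g) := by
              intro a
              have hv : (g a) -ᵥ (g a₀) ∈ vectorSpan ℝ (Set.range g) :=
                vsub_mem_vectorSpan ℝ (Set.mem_range_self a) (Set.mem_range_self a₀)
              simpa [vsub_eq_sub] using hv
            refine ⟨fun a => L ⟨g a - g a₀, hmem a⟩, Isometry.of_dist_eq fun a a' => ?_⟩
            rw [L.dist_map]
            rw [show dist a a' = dist (g a) (g a') from (hg.dist_eq a a').symm]
            rw [Subtype.dist_eq, dist_eq_norm, dist_eq_norm]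
            simp only [Submodule.coe_norm]
            congr 1
            abel
        obtain ⟨f0, hf0⟩ := ih h'
        obtain ⟨L, -⟩ := menger_pad (Nat.le_succ n)
        exact ⟨fun x => L (f0 x), L.isometry.comp hf0⟩
end

section
/- (Blumenthal) Let X be a finite metric space with card X = n+1. Then X embeds isometrically in E^n if and only if for every k = 1,...,n and every (k+1)-tuple (x_0,...,x_k) ∈ X^{k+1}, the Cayley–Menger determinant D_k(x_0,...,x_k) has the sign of (−1)^{k+1} or vanishes. -/
open scoped Matrix


/-- The Gram-type matrix associated to a tuple of points. -/
noncomputable def cmGram {X : Type*} [PseudoMetricSpace X] (k : ℕ) (x : Fin (k + 1) → X) :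
    Matrix (Fin k) (Fin k) ℝ :=
  Matrix.of fun i j =>
    (dist (x 0) (x i.succ) ^ 2 + dist (x 0) (x j.succ) ^ 2 - dist (x i.succ) (x j.succ) ^ 2) / 2

theorem cayleyMenger_eq {X : Type*} [PseudoMetricSpace X] (k : ℕ) (x : Fin (k + 1) → X) :
    cayleyMenger k x = (-1) ^ (k + 1) * 2 ^ k * (cmGram k x).det := by
  set M : Matrix (Fin (k + 2)) (Fin (k + 2)) ℝ := Matrix.of fun i j : Fin (k + 2) =>
    if hi : i = 0 then (if j = 0 then 0 else 1)
    else if hj : j = 0 then 1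
    else dist (x (i.pred hi)) (x (j.pred hj)) ^ 2 with hM
  have h10 : (1 : Fin (k+2)) ≠ 0 := Fin.one_pos.ne'
  -- entry lemmas for M
  have hM00 : M 0 0 = 0 := by simp [hM]
  have hM0 : ∀ j : Fin (k+2), j ≠ 0 → M 0 j = 1 := by intro j hj; simp [hM, hj]
  have hMi0 : ∀ i : Fin (k+2), i ≠ 0 → M i 0 = 1 := by intro i hi; simp [hM, hi]
  have hM11 : M 1 1 = 0 := by simp [hM, h10, Fin.pred_one]
  have hM1s : ∀ j : Fin (k+1), M 1 j.succ = dist (x 0) (x j) ^ 2 := by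
    intro j; simp [hM, h10, Fin.succ_ne_zero, Fin.pred_one, Fin.pred_succ]
  have hMs1 : ∀ i : Fin (k+1), M i.succ 1 = dist (x i) (x 0) ^ 2 := by
    intro i; simp [hM, h10, Fin.succ_ne_zero, Fin.pred_one, Fin.pred_succ]
  have hMss : ∀ i j : Fin (k+1), M i.succ j.succ = dist (x i) (x j) ^ 2 := by
    intro i j; simp [hM, Fin.succ_ne_zero, Fin.pred_succ]
  -- row and column operations
  set c : Fin (k+2) → ℝ := fun i => if i = 0 ∨ i = 1 then 0 else 1 with hc
  set N1 : Matrix (Fin (k+2)) (Fin (k+2)) ℝ := Matrix.of fun i j => M i j - c i * M 1 j with hN1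
  have hstep1 : M.det = N1.det := by
    apply Matrix.det_eq_of_forall_row_eq_smul_add_const c 1 (by simp [hc])
    intro i j
    have : N1 1 j = M 1 j := by simp [hN1, hc]
    simp only [hN1, Matrix.of_apply, this]
    simp [hc]
  set N : Matrix (Fin (k+2)) (Fin (k+2)) ℝ := Matrix.of fun i j => N1 i j - c j * N1 i 1 with hN
  have hstep2 : N1.det = N.det := by
    rw [← Matrix.det_transpose N1, ← Matrix.det_transpose N]
    apply Matrix.det_eq_of_forall_row_eq_smul_add_const c 1 (by simp [hc])
    intro i j
    have : N j 1 = N1 j 1 := by simp [hN, hc]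
    simp only [Matrix.transpose_apply, hN, Matrix.of_apply, this]
    simp [hc]
  -- entries of N
  have c0 : c 0 = 0 := by simp [hc]
  have hN0 : ∀ j : Fin (k+2), N 0 j = if j = 1 then 1 else 0 := by
    intro j
    simp only [hN, hN1, Matrix.of_apply, c0, zero_mul, sub_zero]
    rcases eq_or_ne j 0 with rfl | hj0
    · simp [hc, hM00, h10.symm]
    rcases eq_or_ne j 1 with rfl | hj1
    · simp [hc, hM0 _ hj0]
    · have hcj : c j = 1 := by simp [hc, hj0, hj1]
      simp [hcj, hM0 _ hj0, hM0 _ h10, hj1]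
  have hNs0 : ∀ i : Fin (k+1), N i.succ 0 = if i = 0 then 1 else 0 := by
    intro i
    simp only [hN, hN1, Matrix.of_apply, c0, zero_mul, sub_zero]
    rcases eq_or_ne i 0 with rfl | hi0
    · simp [show c 1 = 0 by simp [hc], hMi0 _ h10]
    · have h1 : i.succ ≠ 1 := fun h => hi0 (Fin.succ_injective _ (h.trans Fin.succ_zero_eq_one.symm))
      have hci : c i.succ = 1 := by simp [hc, Fin.succ_ne_zero, h1]
      simp [hci, hMi0 _ (Fin.succ_ne_zero _), hMi0 _ h10, hi0]
  have hNss : ∀ i j : Fin k, N i.succ.succ j.succ.succ = (-2) * cmGram k x i j := by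
    intro i j
    have hci : c i.succ.succ = 1 := by simp [hc, Fin.succ_ne_zero, Fin.succ_succ_ne_one]
    have hcj : c j.succ.succ = 1 := by simp [hc, Fin.succ_ne_zero, Fin.succ_succ_ne_one]
    simp only [hN, hN1, Matrix.of_apply, hci, hcj, one_mul]
    rw [hMss, hM1s, hMs1, hM11, cmGram]
    simp only [Matrix.of_apply]
    rw [dist_comm (x i.succ) (x 0)]
    ring
  -- Laplace expansions
  set P : Matrix (Fin (k+1)) (Fin (k+1)) ℝ :=
    N.submatrix Fin.succ (1 : Fin (k+2)).succAbove with hP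
  have hsa0 : (1 : Fin (k+2)).succAbove 0 = 0 := by
    rw [Fin.succAbove_of_castSucc_lt _ _ (by simp)]
    simp
  have hsas : ∀ j : Fin k, (1 : Fin (k+2)).succAbove j.succ = j.succ.succ := by
    intro j
    rw [Fin.succAbove_of_le_castSucc _ _ (by rw [Fin.le_def]; simp)]
  have e1 : N.det = -P.det := by
    rw [Matrix.det_succ_row_zero, Finset.sum_eq_single (1 : Fin (k+2))]
    · rw [hN0]; simp; rfl
    · intro b _ hb; rw [hN0]; simp [hb]
    · intro hmem; exact absurd (Finset.mem_univ _) hmem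
  set Q : Matrix (Fin k) (Fin k) ℝ := P.submatrix Fin.succ Fin.succ with hQdef
  have e2 : P.det = Q.det := by
    rw [Matrix.det_succ_column_zero, Finset.sum_eq_single (0 : Fin (k+1))]
    · have : P 0 0 = 1 := by
        rw [hP]; simp only [Matrix.submatrix_apply, hsa0]
        simpa using hNs0 0
      rw [this]; simp [hQdef, Fin.succAbove_zero]
    · intro b _ hb
      have : P b 0 = 0 := by
        rw [hP]; simp only [Matrix.submatrix_apply, hsa0, hNs0, if_neg hb]
      rw [this]; simp
    · intro hmem; exact absurd (Finset.mem_univ _) hmem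
  have e3 : Q = (-2 : ℝ) • cmGram k x := by
    ext i j
    rw [hQdef, hP]
    simp only [Matrix.submatrix_apply, hsas, Matrix.smul_apply, smul_eq_mul]
    exact hNss i j
  have : cayleyMenger k x = M.det := rfl
  rw [this, hstep1, hstep2, e1, e2, e3, Matrix.det_smul]
  simp only [Fintype.card_fin]
  rw [neg_pow]
  ring


theorem posSemidef_of_principal_minors :
    ∀ (N : ℕ) (G : Matrix (Fin N) (Fin N) ℝ), G.IsHermitian →
      (∀ (m : Type) (_ : Fintype m) (_ : DecidableEq m) (e : m ↪ Fin N),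
        0 ≤ (G.submatrix e e).det) → G.PosSemidef := by
  intro N
  induction N with
  | zero =>
    intro G hG _
    refine ⟨hG, fun x => ?_⟩
    simp [Finsupp.sum_fintype]
  | succ n ih =>
    intro G hG h
    have hdiag : ∀ i, 0 ≤ G i i := by
      intro i
      have := h (Fin 1) (by infer_instance) (by infer_instance)
        ⟨fun _ => i, fun a b _ => Subsingleton.elim a b⟩
      rw [Matrix.det_fin_one] at this; exact this
    by_cases hc : ∃ i, 0 < G i i
    · obtain ⟨i₀, hi₀⟩ := hc
      set e : Fin (n+1) ≃ (Fin n ⊕ Unit) :=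
        (finSuccEquiv' i₀).trans (Equiv.optionEquivSumPUnit (Fin n)) with hedef
      set H : Matrix (Fin n ⊕ Unit) (Fin n ⊕ Unit) ℝ := G.submatrix e.symm e.symm with hHdef
      have hH : H.IsHermitian := hG.submatrix _
      set A : Matrix (Fin n) (Fin n) ℝ := H.toBlocks₁₁ with hA
      set B : Matrix (Fin n) Unit ℝ := H.toBlocks₁₂ with hB
      set D : Matrix Unit Unit ℝ := H.toBlocks₂₂ with hD
      have hDval : D PUnit.unit PUnit.unit = G i₀ i₀ := by
        simp [hD, hHdef, Matrix.toBlocks₂₂, hedef, Equiv.optionEquivSumPUnit]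
      have h21 : H.toBlocks₂₁ = Bᴴ := by
        ext i j
        have := congrFun (congrFun hH (Sum.inr i)) (Sum.inl j)
        simp only [Matrix.conjTranspose_apply, star_trivial] at this ⊢
        simpa [Matrix.toBlocks₂₁, hB, Matrix.toBlocks₁₂] using this.symm
      have hBlocks : H = Matrix.fromBlocks A B Bᴴ D := by
        conv_lhs => rw [← Matrix.fromBlocks_toBlocks H]
        rw [h21]
      have hDpd : D.PosDef := by
        rw [Matrix.posDef_iff_dotProduct_mulVec]
        constructor
        · ext i j
          simp [Matrix.conjTranspose_apply]
        · intro z hz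
          have hzu : z PUnit.unit ≠ 0 := by
            intro h0
            apply hz
            funext u
            cases u; exact h0
          have : star z ⬝ᵥ D.mulVec z = G i₀ i₀ * (z PUnit.unit * z PUnit.unit) := by
            simp [dotProduct, Matrix.mulVec, hDval]
            ring
          rw [this]
          exact mul_pos hi₀ (mul_self_pos.mpr hzu)
      have hDdet : D.det = G i₀ i₀ := by
        rw [Matrix.det_unique]; exact hDval
      haveI : Invertible D := D.invertibleOfIsUnitDet (by
        rw [hDdet]; exact isUnit_iff_ne_zero.mpr hi₀.ne')
      set S : Matrix (Fin n) (Fin n) ℝ := A - B * D⁻¹ * Bᴴ with hSdef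
      have hkey : G.PosSemidef ↔ S.PosSemidef := by
        rw [← Matrix.posSemidef_submatrix_equiv e.symm, ← hHdef, hBlocks,
          Matrix.PosDef.fromBlocks₂₂ A B hDpd]
      rw [hkey]
      have hAH : A.IsHermitian := by
        ext i j
        have := congrFun (congrFun hH (Sum.inl i)) (Sum.inl j)
        simpa [hA, Matrix.toBlocks₁₁, Matrix.conjTranspose_apply] using this
      have hDH : D.IsHermitian := hDpd.1
      have hDinvH : D⁻¹.IsHermitian := hDH.inv
      have hSH : S.IsHermitian := by
        have hm : (B * D⁻¹ * Bᴴ).IsHermitian := by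
          unfold Matrix.IsHermitian
          rw [Matrix.conjTranspose_mul, Matrix.conjTranspose_mul,
            Matrix.conjTranspose_conjTranspose, hDinvH, Matrix.mul_assoc]
        exact hAH.sub hm
      apply ih S hSH
      intro m fm dm f
      have hmain := h (m ⊕ PUnit) (by infer_instance) (by infer_instance)
        ⟨e.symm ∘ Sum.map f id, e.symm.injective.comp
          (f.injective.sumMap Function.injective_id)⟩
      have h0 : 0 ≤ (H.submatrix (Sum.map ⇑f id) (Sum.map ⇑f id)).det := by
        simpa [hHdef, Matrix.submatrix_submatrix] using hmain
      have hsub : H.submatrix (Sum.map ⇑f id) (Sum.map ⇑f id)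
          = Matrix.fromBlocks (A.submatrix f f) (B.submatrix f id) (Bᴴ.submatrix id f) D := by
        rw [hBlocks]
        ext i j
        cases i <;> cases j <;> rfl
      rw [hsub, Matrix.det_fromBlocks₂₂] at h0
      have hSsub : A.submatrix ⇑f ⇑f - B.submatrix ⇑f id * ⅟D * Bᴴ.submatrix id ⇑f
          = S.submatrix ⇑f ⇑f := by
        rw [Matrix.invOf_eq_nonsing_inv]
        ext i j
        simp [hSdef, Matrix.mul_apply, Matrix.sub_apply, Matrix.submatrix_apply]
      rw [hSsub] at h0
      have hDdetpos : 0 < D.det := by rw [hDdet]; exact hi₀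
      nlinarith [h0, hDdetpos]
    · push_neg at hc
      have hd0 : ∀ i, G i i = 0 := fun i => le_antisymm (hc i) (hdiag i)
      have hoff : ∀ i j, G i j = 0 := by
        intro i j
        rcases eq_or_ne i j with rfl | hij
        · exact hd0 i
        · have hsym : G j i = G i j := by
            simpa using congrFun (congrFun hG i) j
          have hinj : Function.Injective ![i, j] := by
            intro a b hab
            fin_cases a <;> fin_cases b <;>
              simp only [Matrix.cons_val_zero, Matrix.cons_val_one, Matrix.head_cons] at hab <;>
              first | rfl | exact absurd hab hij | exact absurd hab.symm hij
          have h2 := h (Fin 2) (by infer_instance) (by infer_instance) ⟨![i, j], hinj⟩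
          rw [Matrix.det_fin_two] at h2
          simp only [Matrix.submatrix_apply, Function.Embedding.coeFn_mk, Matrix.cons_val_zero,
            Matrix.cons_val_one, Matrix.head_cons] at h2
          rw [hd0, hd0, hsym] at h2
          nlinarith
      have : G = 0 := by ext i j; exact hoff i j
      rw [this]
      exact Matrix.PosSemidef.zero


lemma cmDetNonnegAux (q : ℕ) (d : ℝ)
    (h : 0 < (-1:ℝ)^(q+1) * ((-1:ℝ)^(q+1) * 2^q * d) ∨ (-1:ℝ)^(q+1) * 2^q * d = 0) :
    0 ≤ d := by
  have hsq : (-1:ℝ)^(q+1) * (-1:ℝ)^(q+1) = 1 := by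
    rw [← pow_add]
    exact Even.neg_one_pow ⟨q+1, by ring⟩
  rcases h with hpos | hzero
  · have h2 : (0:ℝ) < 2^q * d := by
      calc (0:ℝ) < (-1:ℝ)^(q+1) * ((-1:ℝ)^(q+1) * 2^q * d) := hpos
        _ = ((-1:ℝ)^(q+1) * (-1:ℝ)^(q+1)) * (2^q * d) := by ring
        _ = 2^q * d := by rw [hsq, one_mul]
    nlinarith [pow_pos (show (0:ℝ) < 2 by norm_num) q]
  · have hne : ((-1:ℝ)^(q+1) * 2^q) ≠ 0 :=
      mul_ne_zero (pow_ne_zero _ (by norm_num)) (by positivity)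
    rcases mul_eq_zero.mp hzero with h' | h'
    · exact absurd h' hne
    · rw [h']

theorem stmt11 {X : Type*} [MetricSpace X] [Fintype X] (n : ℕ)
    (hcard : Fintype.card X = n + 1) :
    (∃ f : X → EuclideanSpace ℝ (Fin n), Isometry f) ↔
      (∀ k : ℕ, 1 ≤ k → k ≤ n → ∀ x : Fin (k + 1) → X,
        0 < (-1 : ℝ) ^ (k + 1) * cayleyMenger k x ∨ cayleyMenger k x = 0) := by
  constructor
  · rintro ⟨f, hf⟩ k _ _ x
    set v : Fin k → EuclideanSpace ℝ (Fin n) := fun i => f (x i.succ) - f (x 0) with hv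
    set W : Matrix (Fin n) (Fin k) ℝ := Matrix.of fun l i => v i l with hW
    have hgram : cmGram k x = Wᴴ * W := by
      ext i j
      have hni : ∀ i : Fin k, ‖v i‖ = dist (x 0) (x i.succ) := by
        intro i
        rw [hv]
        simp only
        rw [← dist_eq_norm, hf.dist_eq, dist_comm]
      have hnij : ‖v i - v j‖ = dist (x i.succ) (x j.succ) := by
        rw [hv]
        simp only
        rw [sub_sub_sub_cancel_right, ← dist_eq_norm, hf.dist_eq]
      have hpol := @norm_sub_sq_real (EuclideanSpace ℝ (Fin n)) _ _ (v i) (v j)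
      have hsum : (Wᴴ * W) i j = (inner ℝ (v i) (v j) : ℝ) := by
        rw [Matrix.mul_apply, PiLp.inner_apply]
        simp [hW, Matrix.conjTranspose_apply, mul_comm]
      rw [cmGram]
      simp only [Matrix.of_apply]
      rw [hsum, ← hni i, ← hni j, ← hnij]
      linarith
    have hdet : 0 ≤ (cmGram k x).det := by
      rw [hgram]
      have hp : (Wᴴ * W).PosSemidef := Matrix.posSemidef_conjTranspose_mul_self W
      rw [hp.isHermitian.det_eq_prod_eigenvalues]
      refine Finset.prod_nonneg fun l _ => ?_
      exact_mod_cast hp.eigenvalues_nonneg l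
    rw [cayleyMenger_eq]
    rcases eq_or_lt_of_le hdet with he | hlt
    · right; rw [← he]; ring
    · left
      have hsq : (-1:ℝ)^(k+1) * (-1:ℝ)^(k+1) = 1 := by
        rw [← pow_add]
        exact Even.neg_one_pow ⟨k+1, by ring⟩
      have h1 : (-1:ℝ)^(k+1) * ((-1:ℝ)^(k+1) * 2^k * (cmGram k x).det)
          = 2^k * (cmGram k x).det := by
        calc (-1:ℝ)^(k+1) * ((-1:ℝ)^(k+1) * 2^k * (cmGram k x).det)
            = ((-1:ℝ)^(k+1) * (-1:ℝ)^(k+1)) * (2^k * (cmGram k x).det) := by ring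
          _ = 2^k * (cmGram k x).det := by rw [hsq, one_mul]
      rw [h1]
      exact mul_pos (by positivity) hlt
  · intro h
    set E : Fin (n+1) ≃ X := (Fintype.equivFinOfCardEq hcard).symm with hE
    set G : Matrix (Fin n) (Fin n) ℝ := cmGram n (⇑E) with hG
    have hGH : G.IsHermitian := by
      ext i j
      simp only [hG, cmGram, Matrix.conjTranspose_apply, Matrix.of_apply, star_trivial]
      rw [dist_comm (E j.succ) (E i.succ)]
      ring
    have hminors : ∀ (m : Type) (_ : Fintype m) (_ : DecidableEq m) (f : m ↪ Fin n),
        0 ≤ (G.submatrix f f).det := by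
      intro m fm dm f
      set g : Fin (Fintype.card m) ≃ m := (Fintype.equivFin m).symm with hg
      have hdet2 : (G.submatrix f f).det = (G.submatrix (⇑f ∘ ⇑g) (⇑f ∘ ⇑g)).det := by
        rw [← Matrix.det_submatrix_equiv_self g (G.submatrix ⇑f ⇑f), Matrix.submatrix_submatrix]
      rw [hdet2]
      set y : Fin (Fintype.card m + 1) → X :=
        fun a => Fin.cases (E 0) (fun i => E (f (g i)).succ) a with hy
      have hyg : cmGram (Fintype.card m) y = G.submatrix (⇑f ∘ ⇑g) (⇑f ∘ ⇑g) := by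
        ext i j
        simp [cmGram, hy, hG]
      rw [← hyg]
      rcases Nat.eq_zero_or_pos (Fintype.card m) with hq0 | hqpos
      · haveI : IsEmpty (Fin (Fintype.card m)) :=
          ⟨fun a => Nat.not_lt_zero a.1 (hq0 ▸ a.2)⟩
        rw [Matrix.det_isEmpty]
        norm_num
      · have hqn : Fintype.card m ≤ n := by
          have := Fintype.card_le_of_embedding f
          simpa using this
        have hh := h (Fintype.card m) hqpos hqn y
        rw [cayleyMenger_eq] at hh
        exact cmDetNonnegAux _ _ hh
    have hpsd : G.PosSemidef := posSemidef_of_principal_minors n G hGH hminors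
    obtain ⟨Sq, hSH0, -, hSS0⟩ := open scoped MatrixOrder in
      CFC.exists_sqrt_of_isSelfAdjoint_of_quasispectrumRestricts (A := Matrix (Fin n) (Fin n) ℝ)
        hpsd.isHermitian (QuasispectrumRestricts.nnreal_of_nonneg hpsd.nonneg)
    have hSS : Sq * Sq = G := hSS0
    have hSH : Sq.IsHermitian := hSH0
    set v : Fin (n+1) → EuclideanSpace ℝ (Fin n) :=
      fun a => Fin.cases (0 : EuclideanSpace ℝ (Fin n))
        (fun i => (WithLp.toLp 2 (fun l => Sq l i) : EuclideanSpace ℝ (Fin n))) a with hv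
    have hsum : ∀ i j : Fin n, ∑ l, Sq l i * Sq l j = G i j := by
      intro i j
      have hrw : ∀ l, Sq l i = Sq i l := by
        intro l
        have := congrFun (congrFun hSH i) l
        simpa using this
      calc ∑ l, Sq l i * Sq l j = ∑ l, Sq i l * Sq l j :=
            Finset.sum_congr rfl fun l _ => by rw [hrw l]
        _ = (Sq * Sq) i j := (Matrix.mul_apply).symm
        _ = G i j := by rw [hSS]
    have hvl : ∀ (i : Fin n) (l : Fin n), v i.succ l = Sq l i := by
      intro i l; simp [hv]
    have hv0 : ∀ l, v 0 l = 0 := by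
      intro l; simp [hv]
    have hGd : ∀ i : Fin n, G i i = dist (E 0) (E i.succ) ^ 2 := by
      intro i
      simp only [hG, cmGram, Matrix.of_apply, dist_self]
      ring
    have key : ∀ a b : Fin (n+1), (∑ l, (v a l - v b l)^2) = (dist (E a) (E b))^2 := by
      intro a b
      induction a using Fin.cases with
      | zero =>
        induction b using Fin.cases with
        | zero => simp [hv0, dist_self]
        | succ j =>
          have hterm : ∀ l, (v 0 l - v (Fin.succ j) l)^2 = Sq l j * Sq l j := by
            intro l; rw [hv0, hvl]; ring
          rw [Finset.sum_congr rfl fun l _ => hterm l, hsum, hGd]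
      | succ i =>
        induction b using Fin.cases with
        | zero =>
          have hterm : ∀ l, (v (Fin.succ i) l - v 0 l)^2 = Sq l i * Sq l i := by
            intro l; rw [hv0, hvl]; ring
          rw [Finset.sum_congr rfl fun l _ => hterm l, hsum, hGd, dist_comm]
        | succ j =>
          have hterm : ∀ l, (v (Fin.succ i) l - v (Fin.succ j) l)^2
              = (Sq l i * Sq l i + Sq l j * Sq l j) - 2 * (Sq l i * Sq l j) := by
            intro l; rw [hvl, hvl]; ring
          rw [Finset.sum_congr rfl fun l _ => hterm l, Finset.sum_sub_distrib,
            Finset.sum_add_distrib, ← Finset.mul_sum, hsum, hsum, hsum]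
          simp only [hG, cmGram, Matrix.of_apply, dist_self]
          ring
    have hdistv : ∀ a b : Fin (n+1), dist (v a) (v b) = dist (E a) (E b) := by
      intro a b
      have hd : dist (v a) (v b) = Real.sqrt (∑ l, (v a l - v b l)^2) := by
        rw [EuclideanSpace.dist_eq]
        congr 1
        exact Finset.sum_congr rfl fun l _ => by rw [Real.dist_eq, sq_abs]
      rw [hd, key a b, Real.sqrt_sq dist_nonneg]
    refine ⟨fun p => v (E.symm p), Isometry.of_dist_eq fun p q => ?_⟩
    have := hdistv (E.symm p) (E.symm q)
    simpa [Equiv.apply_symm_apply] using this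
end

section
/- Let (X,d) be a metric space with marked point p, and let f : M_n → ℝ be continuous and homogeneous of degree s₀ > 0. Define δ(x_1,...,x_n) = max_i d(x_i,p) and f*(x_1,...,x_n) = f(m(x_1,...,x_n)/δ(x_1,...,x_n)) for (x_1,...,x_n) ≠ (p,...,p), and f*(p,...,p) = 0, where m(x_1,...,x_n) is the distance matrix (d(x_i,x_j)). If there exist points α_1,...,α_n in some pretangent space Ω at p with f(m(α_1,...,α_n)) < 0, then liminf_{x_1,...,x_n → p} f*(x_1,...,x_n) < 0. Conversely, if liminf_{x_1,...,x_n → p} f*(x_1,...,x_n) ≥ 0, then for every pretangent space Ω to X at p and all α_1,...,α_n ∈ Ω the inequality f(m(α_1,...,α_n)) ≥ 0 holds. (Transfer Principle, single-function case.) -/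
open Filter

/-- `r` is a normalizing sequence: positive reals tending to zero. -/
def NormSeq (r : ℕ → ℝ) : Prop :=
  (∀ m, 0 < r m) ∧ Tendsto r atTop (nhds 0)

/-- Two sequences are mutually stable w.r.t. the normalizing sequence `r`. -/
def MutuallyStable {X : Type*} [MetricSpace X] (r : ℕ → ℝ) (x y : ℕ → X) : Prop :=
  ∃ L : ℝ, Tendsto (fun m => dist (x m) (y m) / r m) atTop (nhds L)

/-- A maximal self-stable family of sequences containing the constant sequence `p`;
its metric identification is a pretangent space `Ω_{p,r}`. -/
def MaxSelfStable {X : Type*} [MetricSpace X] (r : ℕ → ℝ) (p : X) (F : Set (ℕ → X)) : Prop :=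
  Function.const ℕ p ∈ F ∧
    (∀ x ∈ F, ∀ y ∈ F, MutuallyStable r x y) ∧
    (∀ z : ℕ → X, z ∉ F → ∃ x ∈ F, ¬ MutuallyStable r x z)

open Classical in
/-- The normalized function `f*` associated with `f` and the marked point `p`. -/
noncomputable def fstar {X : Type*} [MetricSpace X] (n : ℕ)
    (f : Matrix (Fin n) (Fin n) ℝ → ℝ) (p : X) : (Fin n → X) → ℝ :=
  fun x =>
    if x = Function.const (Fin n) p then 0
    else f ((⨆ i, dist (x i) p)⁻¹ • Matrix.of fun i j => dist (x i) (x j))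

/-- Finite suprema pass to limits. -/
lemma tendsto_ciSup_fin {n : ℕ} [NeZero n] {u : ℕ → Fin n → ℝ} {L : Fin n → ℝ}
    (h : ∀ i, Tendsto (fun m => u m i) atTop (nhds (L i))) :
    Tendsto (fun m => ⨆ i, u m i) atTop (nhds (⨆ i, L i)) := by
  haveI : Nonempty (Fin n) := Fin.pos_iff_nonempty.mp (Nat.pos_of_ne_zero (NeZero.ne n))
  have := Filter.Tendsto.finset_sup'_nhds_apply (s := Finset.univ) (f := fun i m => u m i)
    (l := atTop) (g := L) Finset.univ_nonempty (fun i _ => h i)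
  simpa [Finset.sup'_univ_eq_ciSup] using this

lemma div_div_aux (d δ r : ℝ) (hr : r ≠ 0) : (d / r) / (δ / r) = δ⁻¹ * d := by
  rcases eq_or_ne δ 0 with h | h
  · simp [h]
  · field_simp

/-- `fstar` is bounded below everywhere. -/
lemma fstar_bddBelow {X : Type*} [MetricSpace X] (p : X) (n : ℕ)
    (f : Matrix (Fin n) (Fin n) ℝ → ℝ) (hf : Continuous f) :
    ∃ b : ℝ, ∀ y : Fin n → X, b ≤ fstar n f p y := by
  set K : Set (Matrix (Fin n) (Fin n) ℝ) := {M | ∀ i j, M i j ∈ Set.Icc (0:ℝ) 2} with hKdef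
  have hK : IsCompact K := by
    have : K = Set.univ.pi (fun _ : Fin n => Set.univ.pi fun _ : Fin n => Set.Icc (0:ℝ) 2) := by
      ext M
      constructor
      · intro h i _ j _; exact h i j
      · intro h i j; exact h i (Set.mem_univ i) j (Set.mem_univ j)
    rw [this]
    exact isCompact_univ_pi fun i => isCompact_univ_pi fun j => isCompact_Icc
  have hKne : K.Nonempty := ⟨0, fun i j => by simp⟩
  obtain ⟨M₀, hM₀K, hmin⟩ := hK.exists_isMinOn hKne hf.continuousOn
  refine ⟨min (f M₀) 0, fun y => ?_⟩
  unfold fstar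
  split_ifs with h
  · exact min_le_right _ _
  · refine (min_le_left _ _).trans (hmin ?_)
    have hex : ∃ i, y i ≠ p := by
      by_contra hc
      push_neg at hc
      exact h (funext fun i => hc i)
    obtain ⟨i₀, hi₀⟩ := hex
    haveI : Nonempty (Fin n) := ⟨i₀⟩
    set δ : ℝ := ⨆ i, dist (y i) p with hδdef
    have hbdd : BddAbove (Set.range fun i => dist (y i) p) :=
      (Set.finite_range _).bddAbove
    have hδi : ∀ i, dist (y i) p ≤ δ := fun i => le_ciSup hbdd i
    have hδpos : 0 < δ := lt_of_lt_of_le (dist_pos.mpr hi₀) (hδi i₀)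
    intro i j
    constructor
    · exact mul_nonneg (inv_nonneg.mpr hδpos.le) dist_nonneg
    · have htri : dist (y i) (y j) ≤ 2 * δ := by
        calc dist (y i) (y j) ≤ dist (y i) p + dist p (y j) := dist_triangle _ _ _
          _ ≤ δ + δ := by
              refine add_le_add (hδi i) ?_
              rw [dist_comm]; exact hδi j
          _ = 2 * δ := by ring
      calc (δ⁻¹ • Matrix.of fun i j => dist (y i) (y j)) i j
          = δ⁻¹ * dist (y i) (y j) := rfl
        _ ≤ 2 := by rw [inv_mul_le_iff₀ hδpos]; linarith

/-- The key direction: a negative value on a pretangent space forces a negative liminf. -/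
lemma key_lemma {X : Type*} [MetricSpace X] (p : X) (n : ℕ)
    (f : Matrix (Fin n) (Fin n) ℝ → ℝ) (s₀ : ℝ) (hs₀ : 0 < s₀)
    (hf : Continuous f)
    (hhom : ∀ δ : ℝ, 0 ≤ δ → ∀ t : Matrix (Fin n) (Fin n) ℝ, f (δ • t) = δ ^ s₀ * f t)
    (r : ℕ → ℝ) (F : Set (ℕ → X)) (x : Fin n → ℕ → X) (D : Matrix (Fin n) (Fin n) ℝ)
    (hr : NormSeq r) (hF : MaxSelfStable r p F) (hx : ∀ i, x i ∈ F)
    (hD : ∀ i j, Tendsto (fun m => dist (x i m) (x j m) / r m) atTop (nhds (D i j)))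
    (hfD : f D < 0) :
    Filter.liminf (fstar n f p) (nhds (Function.const (Fin n) p)) < 0 := by
  -- f of the zero matrix is zero
  have hf0 : f 0 = 0 := by
    have := hhom 0 le_rfl 0
    rw [zero_smul, Real.zero_rpow hs₀.ne', zero_mul] at this
    exact this
  -- n ≠ 0
  rcases Nat.eq_zero_or_pos n with hn | hn
  · exfalso
    subst hn
    have : D = 0 := by ext i j; exact i.elim0
    rw [this, hf0] at hfD
    exact lt_irrefl 0 hfD
  haveI : NeZero n := ⟨hn.ne'⟩
  haveI : Nonempty (Fin n) := Fin.pos_iff_nonempty.mp hn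
  -- limits of distances to the marked point
  have hms : ∀ i, MutuallyStable r (x i) (Function.const ℕ p) :=
    fun i => hF.2.1 (x i) (hx i) (Function.const ℕ p) hF.1
  choose L' hL' using hms
  have hL'' : ∀ i, Tendsto (fun m => dist (x i m) p / r m) atTop (nhds (L' i)) := by
    intro i; simpa [Function.const] using hL' i
  have hL'nn : ∀ i, 0 ≤ L' i := fun i =>
    ge_of_tendsto (hL'' i) (Eventually.of_forall fun m => div_nonneg dist_nonneg (hr.1 m).le)
  set L : ℝ := ⨆ i, L' i with hLdef
  have hbddL : BddAbove (Set.range L') := (Set.finite_range _).bddAbove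
  have hL'leL : ∀ i, L' i ≤ L := fun i => le_ciSup hbddL i
  have hLnn : 0 ≤ L := le_trans (hL'nn (Classical.arbitrary _)) (hL'leL _)
  -- the case L = 0 is impossible
  rcases hLnn.lt_or_eq with hL | hL
  swap
  · exfalso
    have hDzero : D = 0 := by
      ext i j
      have h1 : D i j ≤ L' i + L' j := by
        refine le_of_tendsto_of_tendsto' (hD i j) ((hL'' i).add (hL'' j)) fun m => ?_
        have htri : dist (x i m) (x j m) ≤ dist (x i m) p + dist (x j m) p := by
          calc dist (x i m) (x j m) ≤ dist (x i m) p + dist p (x j m) := dist_triangle _ _ _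
            _ = dist (x i m) p + dist (x j m) p := by rw [dist_comm p]
        rw [← add_div]
        exact div_le_div_of_nonneg_right htri (hr.1 m).le
      have h2 : 0 ≤ D i j :=
        ge_of_tendsto (hD i j) (Eventually.of_forall fun m => div_nonneg dist_nonneg (hr.1 m).le)
      have h3 : L' i = 0 := le_antisymm (hL ▸ hL'leL i) (hL'nn i)
      have h4 : L' j = 0 := le_antisymm (hL ▸ hL'leL j) (hL'nn j)
      have : D i j = 0 := le_antisymm (by rw [h3, h4, add_zero] at h1; exact h1) h2
      simpa using this
    rw [hDzero, hf0] at hfD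
    exact lt_irrefl 0 hfD
  -- some coordinate escapes at rate L' i₀ > 0
  have hex : ∃ i₀, 0 < L' i₀ := by
    by_contra hc
    push_neg at hc
    exact absurd (ciSup_le hc) (not_le.mpr hL)
  obtain ⟨i₀, hi₀⟩ := hex
  -- each sequence tends to p
  have hxt : ∀ i, Tendsto (fun m => x i m) atTop (nhds p) := by
    intro i
    rw [tendsto_iff_dist_tendsto_zero]
    have hmul := (hL'' i).mul hr.2
    rw [mul_zero] at hmul
    have he : (fun m => dist (x i m) p / r m * r m) = fun m => dist (x i m) p :=
      funext fun m => div_mul_cancel₀ _ (hr.1 m).ne'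
    rwa [he] at hmul
  have hy : Tendsto (fun m => fun i => x i m) atTop (nhds (Function.const (Fin n) p)) :=
    tendsto_pi_nhds.mpr fun i => hxt i
  -- convergence of the normalizing supremum
  have hsup : Tendsto (fun m => (⨆ i, dist (x i m) p) / r m) atTop (nhds L) := by
    have he : ∀ m, (⨆ i, dist (x i m) p) / r m = ⨆ i, dist (x i m) p / r m := by
      intro m
      rw [← Finset.sup'_univ_eq_ciSup, ← Finset.sup'_univ_eq_ciSup]
      exact Finset.comp_sup'_eq_sup'_comp _ (fun a => a / r m)
        (fun a b => (max_div_div_right (hr.1 m).le a b).symm)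
    simp only [he]
    exact tendsto_ciSup_fin hL''
  -- entrywise convergence of the normalized matrices
  have hEntry : ∀ i j, Tendsto
      (fun m => (⨆ k, dist (x k m) p)⁻¹ * dist (x i m) (x j m)) atTop (nhds (L⁻¹ * D i j)) := by
    intro i j
    have hdiv : Tendsto (fun m => dist (x i m) (x j m) / r m / ((⨆ k, dist (x k m) p) / r m))
        atTop (nhds (D i j / L)) := (hD i j).div hsup hL.ne'
    have he : (fun m => dist (x i m) (x j m) / r m / ((⨆ k, dist (x k m) p) / r m))
        = fun m => (⨆ k, dist (x k m) p)⁻¹ * dist (x i m) (x j m) :=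
      funext fun m => div_div_aux _ _ _ (hr.1 m).ne'
    rw [he] at hdiv
    have : D i j / L = L⁻¹ * D i j := by rw [div_eq_mul_inv, mul_comm]
    rwa [this] at hdiv
  have hMat : Tendsto
      (fun m => (⨆ k, dist (x k m) p)⁻¹ • Matrix.of fun i j => dist (x i m) (x j m))
      atTop (nhds (L⁻¹ • D)) := by
    refine tendsto_pi_nhds.mpr fun i => tendsto_pi_nhds.mpr fun j => ?_
    exact hEntry i j
  have hfM : Tendsto
      (fun m => f ((⨆ k, dist (x k m) p)⁻¹ • Matrix.of fun i j => dist (x i m) (x j m)))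
      atTop (nhds (f (L⁻¹ • D))) := (hf.tendsto _).comp hMat
  -- the limit value is negative
  set v : ℝ := f (L⁻¹ • D) with hvdef
  have hv : v < 0 := by
    rw [hvdef, hhom L⁻¹ (inv_nonneg.mpr hL.le) D]
    exact mul_neg_of_pos_of_neg (Real.rpow_pos_of_pos (inv_pos.mpr hL) s₀) hfD
  -- eventually the point sequence differs from the constant
  have hne : ∀ᶠ m in atTop, (fun i => x i m) ≠ Function.const (Fin n) p := by
    have := (hL'' i₀).eventually (eventually_gt_nhds (half_lt_self hi₀))
    filter_upwards [this] with m hm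
    intro hcontra
    have hx0 : x i₀ m = p := congrFun hcontra i₀
    rw [hx0, dist_self, zero_div] at hm
    linarith [half_pos hi₀]
  -- eventually fstar is ≤ v/2 < 0
  have hev : ∀ᶠ m in atTop, fstar n f p (fun i => x i m) ≤ v / 2 := by
    have hvv : v < v / 2 := by linarith
    filter_upwards [hne, hfM.eventually (eventually_le_nhds hvv)] with m h1 h2
    unfold fstar
    rw [if_neg h1]
    exact h2
  have hfreq : ∃ᶠ y in nhds (Function.const (Fin n) p), fstar n f p y ≤ v / 2 :=
    hy.frequently hev.frequently
  obtain ⟨b, hb⟩ := fstar_bddBelow p n f hf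
  have hbd : IsBoundedUnder (· ≥ ·) (nhds (Function.const (Fin n) p)) (fstar n f p) :=
    ⟨b, eventually_map.mpr (Eventually.of_forall fun y => hb y)⟩
  calc Filter.liminf (fstar n f p) (nhds (Function.const (Fin n) p))
      ≤ v / 2 := liminf_le_of_frequently_le hfreq hbd
    _ < 0 := by linarith

/-- Transfer principle (single-function case). Points of a pretangent space are
represented by members of a maximal self-stable family `F`, and the distance matrix
`D` of such points is given by the limits `D i j = lim dist (x i m) (x j m) / r m`. -/
theorem stmt19 {X : Type*} [MetricSpace X] (p : X) (n : ℕ)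
    (f : Matrix (Fin n) (Fin n) ℝ → ℝ) (s₀ : ℝ) (hs₀ : 0 < s₀)
    (hf : Continuous f)
    (hhom : ∀ δ : ℝ, 0 ≤ δ → ∀ t : Matrix (Fin n) (Fin n) ℝ, f (δ • t) = δ ^ s₀ * f t) :
    ((∃ (r : ℕ → ℝ) (F : Set (ℕ → X)) (x : Fin n → ℕ → X)
        (D : Matrix (Fin n) (Fin n) ℝ),
        NormSeq r ∧ MaxSelfStable r p F ∧ (∀ i, x i ∈ F) ∧
        (∀ i j, Tendsto (fun m => dist (x i m) (x j m) / r m) atTop (nhds (D i j))) ∧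
        f D < 0) →
      Filter.liminf (fstar n f p) (nhds (Function.const (Fin n) p)) < 0) ∧
    (0 ≤ Filter.liminf (fstar n f p) (nhds (Function.const (Fin n) p)) →
      ∀ (r : ℕ → ℝ) (F : Set (ℕ → X)) (x : Fin n → ℕ → X)
        (D : Matrix (Fin n) (Fin n) ℝ),
        NormSeq r → MaxSelfStable r p F → (∀ i, x i ∈ F) →
        (∀ i j, Tendsto (fun m => dist (x i m) (x j m) / r m) atTop (nhds (D i j))) →
        0 ≤ f D) := by
  constructor
  · rintro ⟨r, F, x, D, hr, hF, hx, hD, hfD⟩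
    exact key_lemma p n f s₀ hs₀ hf hhom r F x D hr hF hx hD hfD
  · intro hli r F x D hr hF hx hD
    by_contra hneg
    push_neg at hneg
    have := key_lemma p n f s₀ hs₀ hf hhom r F x D hr hF hx hD hneg
    linarith
end
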